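/- Let n be a natural number, G a group, and ρ : G →* (V ≃ₗ[ℂ] V) a linear action of G on V = (Fin n → ℂ). Let f, h₁ ∈ MvPolynomial (Fin n) ℂ be homogeneous of the same degree d, with f nonzero and squarefree, h₁ and f relatively prime (IsRelPrime h₁ f), and suppose f(ρ(g)v) = χ(g)·f(v) for all g ∈ G, v ∈ V, where χ : G →* ℂˣ. For ε ∈ ℂ let V_ε = {x ∈ V : f(x) = 0 ∧ h₁(x) = ε}. Then there exists an additive Φ : G → ℂ with h₁(ρ(g)v) = χ(g)·(f(v)·Φ(g) + h₁(v)) for all g, v, if and only if ρ(g) maps V_ε onto V_{χ(g)·ε} for every g ∈ G and every ε ∈ ℂ. -/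

import Mathlib

open MvPolynomial

private lemma aeval_eq_eval' {n : ℕ} (x : Fin n → ℂ) (p : MvPolynomial (Fin n) ℂ) :
    aeval x p = eval x p := by
  rw [aeval_def, Algebra.algebraMap_self]; rfl

private lemma eq_C_of_mul_homogeneous {n : ℕ} {f q : MvPolynomial (Fin n) ℂ} {d : ℕ}
    (hf : f.IsHomogeneous d) (hf0 : f ≠ 0) (hP : (f * q).IsHomogeneous d) :
    q = C (coeff 0 q) := by
  have hcomp : ∀ i ∈ Finset.range (q.totalDegree + 1), i ≠ 0 →
      homogeneousComponent i q = 0 := by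
    intro i hi hi0
    have hsum : f * q = ∑ j ∈ Finset.range (q.totalDegree + 1),
        f * homogeneousComponent j q := by
      rw [← Finset.mul_sum, sum_homogeneousComponent]
    have h1 : homogeneousComponent (d + i) (f * q) = 0 := by
      rw [homogeneousComponent_of_mem (n := d) ((mem_homogeneousSubmodule _ _).2 hP),
        if_neg (by omega)]
    have h2 : homogeneousComponent (d + i) (f * q) = f * homogeneousComponent i q := by
      rw [hsum, map_sum]
      rw [Finset.sum_eq_single i]
      · rw [homogeneousComponent_of_mem ((mem_homogeneousSubmodule _ _).2
          (hf.mul (homogeneousComponent_isHomogeneous i q))), if_pos rfl]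
      · intro j hj hji
        rw [homogeneousComponent_of_mem (n := d + j) ((mem_homogeneousSubmodule _ _).2
          (hf.mul (homogeneousComponent_isHomogeneous j q))), if_neg (by omega)]
      · intro h; exact absurd hi h
    have := h1.symm.trans h2
    rcases mul_eq_zero.1 this.symm with h | h
    · exact absurd h hf0
    · exact h
  conv_lhs => rw [← sum_homogeneousComponent q]
  rw [Finset.sum_eq_single 0]
  · exact homogeneousComponent_zero q
  · intro j hj hj0; exact hcomp j hj hj0
  · intro h; simp at h

private lemma key_const {n : ℕ} {G : Type*} [Group G]
    (ρ : G →* ((Fin n → ℂ) ≃ₗ[ℂ] (Fin n → ℂ)))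
    {d : ℕ} {f h₁ : MvPolynomial (Fin n) ℂ}
    (hf0 : f ≠ 0) (hsq : Squarefree f)
    (hfhom : f.IsHomogeneous d) (hh₁hom : h₁.IsHomogeneous d)
    (g : G) (a : ℂ)
    (hvan : ∀ v : Fin n → ℂ, eval v f = 0 → eval (ρ g v) h₁ = a * eval v h₁) :
    ∃ c : ℂ, ∀ v : Fin n → ℂ, eval (ρ g v) h₁ = a * eval v h₁ + c * eval v f := by
  classical
  set s : Fin n → MvPolynomial (Fin n) ℂ :=
    fun j => ∑ i : Fin n, C ((ρ g) (fun k => if i = k then 1 else 0) j) * X i with hs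
  have hsev : ∀ v : Fin n → ℂ, (fun j => eval v (s j)) = ρ g v := by
    intro v
    funext j
    have := LinearMap.pi_apply_eq_sum_univ ((ρ g).toLinearMap) v
    have hj := congrFun this j
    simp only [LinearEquiv.coe_coe] at hj
    rw [hj]
    simp [hs, Finset.sum_apply, mul_comm]
  set P : MvPolynomial (Fin n) ℂ := aeval s h₁ - C a * h₁ with hP
  have hPeval : ∀ v : Fin n → ℂ, eval v P = eval (ρ g v) h₁ - a * eval v h₁ := by
    intro v
    rw [hP]
    have h2 : eval v (aeval s h₁) = eval (ρ g v) h₁ := by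
      rw [aeval_eq_bind₁, ← aeval_eq_eval', aeval_bind₁, aeval_eq_eval']
      simp only [aeval_eq_eval', hsev]
    rw [map_sub, map_mul, eval_C, h2]
  have hPhom : P.IsHomogeneous d := by
    apply IsHomogeneous.sub
    · have := hh₁hom.aeval s (n := 1) ?_
      · simpa using this
      · intro j
        apply IsHomogeneous.sum
        intro i _
        simpa using (isHomogeneous_C_mul_X_pow ((ρ g) (fun k => if i = k then 1 else 0) j) i 1)
    · exact hh₁hom.C_mul a
  have hdvd : f ∣ P := by
    have hmem : P ∈ vanishingIdeal ℂ (zeroLocus ℂ (Ideal.span {f})) := by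
      rw [mem_vanishingIdeal_iff]
      intro x hx
      rw [aeval_eq_eval']
      have hfx : eval x f = 0 := hx f (Ideal.subset_span rfl)
      rw [hPeval, hvan x hfx, sub_self]
    rw [vanishingIdeal_zeroLocus_eq_radical] at hmem
    obtain ⟨k, hk⟩ := hmem
    exact hsq.isRadical k P (Ideal.mem_span_singleton.1 hk)
  obtain ⟨q, hq⟩ := hdvd
  have hqC : q = C (coeff 0 q) := eq_C_of_mul_homogeneous hfhom hf0 (hq ▸ hPhom)
  refine ⟨coeff 0 q, fun v => ?_⟩
  have := hPeval v
  rw [hq, hqC] at this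
  rw [eval_mul, eval_C] at this
  linear_combination -this

/-- Geometric interpretation: for `f` reduced, `h₁/f` is an additive relative invariant
if and only if `ρ(g)` maps `V_ε = {f = 0, h₁ = ε}` onto `V_{χ(g)·ε}` for all `g`, `ε`. -/
theorem additive_relative_invariant_iff_permutes_level_sets
    (n : ℕ) {G : Type*} [Group G]
    (ρ : G →* ((Fin n → ℂ) ≃ₗ[ℂ] (Fin n → ℂ)))
    (d : ℕ) (f h₁ : MvPolynomial (Fin n) ℂ)
    (hf0 : f ≠ 0) (hsq : Squarefree f)
    (hfhom : f.IsHomogeneous d) (hh₁hom : h₁.IsHomogeneous d)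
    (hrp : IsRelPrime h₁ f)
    (χ : G →* ℂˣ)
    (hrel : ∀ (g : G) (v : Fin n → ℂ), eval (ρ g v) f = (χ g : ℂ) * eval v f) :
    (∃ Φ : G → ℂ, (∀ g₁ g₂ : G, Φ (g₁ * g₂) = Φ g₁ + Φ g₂) ∧
      ∀ (g : G) (v : Fin n → ℂ),
        eval (ρ g v) h₁ = (χ g : ℂ) * (eval v f * Φ g + eval v h₁)) ↔
    (∀ (g : G) (ε : ℂ),
      (fun v => ρ g v) '' {v : Fin n → ℂ | eval v f = 0 ∧ eval v h₁ = ε} =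
        {v : Fin n → ℂ | eval v f = 0 ∧ eval v h₁ = (χ g : ℂ) * ε}) := by
  have hne : ∀ g : G, (χ g : ℂ) ≠ 0 := fun g => (χ g).ne_zero
  constructor
  · rintro ⟨Φ, hadd, hΦ⟩ g ε
    ext w
    simp only [Set.mem_image, Set.mem_setOf_eq]
    constructor
    · rintro ⟨v, ⟨hfv, hhv⟩, rfl⟩
      constructor
      · rw [hrel g v, hfv, mul_zero]
      · rw [hΦ g v, hfv, hhv]; ring
    · rintro ⟨hfw, hhw⟩
      set v := (ρ g).symm w with hv
      have hgv : ρ g v = w := (ρ g).apply_symm_apply w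
      have hfv : eval v f = 0 := by
        have h1 := hrel g v
        rw [hgv, hfw] at h1
        exact (mul_eq_zero.1 h1.symm).resolve_left (hne g)
      have hhv : eval v h₁ = ε := by
        have h1 := hΦ g v
        rw [hgv, hfv, hhw, zero_mul, zero_add] at h1
        exact (mul_left_cancel₀ (hne g) h1).symm
      exact ⟨v, ⟨hfv, hhv⟩, hgv⟩
  · intro hperm
    have hvan : ∀ (g : G) (v : Fin n → ℂ), eval v f = 0 →
        eval (ρ g v) h₁ = (χ g : ℂ) * eval v h₁ := by
      intro g v hv
      have hmem : ρ g v ∈ {w : Fin n → ℂ |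
          eval w f = 0 ∧ eval w h₁ = (χ g : ℂ) * eval v h₁} := by
        rw [← hperm g (eval v h₁)]
        exact ⟨v, ⟨hv, rfl⟩, rfl⟩
      exact hmem.2
    choose c hc using fun g => key_const ρ hf0 hsq hfhom hh₁hom g ((χ g : ℂ)) (hvan g)
    obtain ⟨v₀, hv₀⟩ : ∃ v : Fin n → ℂ, eval v f ≠ 0 := by
      by_contra h
      push_neg at h
      exact hf0 (MvPolynomial.funext fun x => by rw [h x, map_zero])
    refine ⟨fun g => c g / (χ g : ℂ), ?_, ?_⟩
    · intro g₁ g₂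
      have hmulapply : ρ (g₁ * g₂) v₀ = ρ g₁ (ρ g₂ v₀) := by rw [map_mul]; rfl
      have e1 := hc (g₁ * g₂) v₀
      have e2 := hc g₁ (ρ g₂ v₀)
      have e3 := hc g₂ v₀
      have e4 := hrel g₂ v₀
      rw [hmulapply, e2, e3, e4] at e1
      have hχ : (χ (g₁ * g₂) : ℂ) = (χ g₁ : ℂ) * (χ g₂ : ℂ) := by
        rw [map_mul, Units.val_mul]
      rw [hχ] at e1
      have hcc : c (g₁ * g₂) = (χ g₁ : ℂ) * c g₂ + (χ g₂ : ℂ) * c g₁ := by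
        have h5 : eval v₀ f *
            (c (g₁ * g₂) - ((χ g₁ : ℂ) * c g₂ + (χ g₂ : ℂ) * c g₁)) = 0 := by
          linear_combination -e1
        exact sub_eq_zero.1 ((mul_eq_zero.1 h5).resolve_left hv₀)
      show c (g₁ * g₂) / (χ (g₁ * g₂) : ℂ) = c g₁ / (χ g₁ : ℂ) + c g₂ / (χ g₂ : ℂ)
      rw [hcc, hχ]
      field_simp
      ring
    · intro g v
      rw [hc g v]
      field_simp
      ring
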